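/- Let ξ₁, …, ξ_k be independent nonnegative random variables with E[ξᵢ^a] < ∞ for some a ∈ [1,2]. Then E[(ξ₁+⋯+ξ_k)^a] ≤ Σᵢ E[ξᵢ^a] + (k−1)·(Σᵢ E[ξᵢ])^a. -/

import Mathlib

open MeasureTheory ProbabilityTheory

section Aux

variable {Ω : Type*} [MeasurableSpace Ω] {μ : Measure Ω}

private lemma rpow_subadd {x y p : ℝ} (hx : 0 ≤ x) (hy : 0 ≤ y) (hp : 0 ≤ p) (hp1 : p ≤ 1) :
    (x + y) ^ p ≤ x ^ p + y ^ p := by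
  have := NNReal.coe_le_coe.2 (NNReal.rpow_add_le_add_rpow x.toNNReal y.toNNReal hp hp1)
  push_cast at this
  rwa [Real.coe_toNNReal x hx, Real.coe_toNNReal y hy] at this

private lemma mul_rpow_sub_one {x a : ℝ} (hx : 0 ≤ x) (ha : 1 ≤ a) :
    x * x ^ (a - 1) = x ^ a := by
  rcases hx.eq_or_lt with h | h
  · rw [← h, Real.zero_rpow (by linarith : a ≠ 0), mul_comm, mul_zero]
  · have := (Real.rpow_add h 1 (a - 1)).symm
    rw [Real.rpow_one] at this
    rw [this]
    norm_num

private lemma aux_rpow_le_one_add {t a b : ℝ} (ht : 0 ≤ t) (hb : 0 ≤ b) (hba : b ≤ a) :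
    t ^ b ≤ 1 + t ^ a := by
  rcases le_or_gt t 1 with h | h
  · have h1 := Real.rpow_le_one ht h hb
    have h2 := Real.rpow_nonneg ht a
    linarith
  · have h1 := Real.rpow_le_rpow_of_exponent_le h.le hba
    linarith

private lemma pointwise_key {x y a : ℝ} (hx : 0 ≤ x) (hy : 0 ≤ y) (ha1 : 1 ≤ a) (ha2 : a ≤ 2) :
    (x + y) ^ a ≤ x ^ a + y ^ a + x * y ^ (a - 1) + x ^ (a - 1) * y := by
  have hxy : (0:ℝ) ≤ x + y := by linarith
  have h1 : (x + y) ^ (a - 1) ≤ x ^ (a - 1) + y ^ (a - 1) :=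
    rpow_subadd hx hy (by linarith) (by linarith)
  have h2 : (x + y) ^ a = (x + y) * (x + y) ^ (a - 1) := (mul_rpow_sub_one hxy ha1).symm
  rw [h2]
  calc (x + y) * (x + y) ^ (a - 1) ≤ (x + y) * (x ^ (a - 1) + y ^ (a - 1)) :=
        mul_le_mul_of_nonneg_left h1 hxy
    _ = x * x ^ (a - 1) + y * y ^ (a - 1) + x * y ^ (a - 1) + x ^ (a - 1) * y := by ring
    _ = x ^ a + y ^ a + x * y ^ (a - 1) + x ^ (a - 1) * y := by
        rw [mul_rpow_sub_one hx ha1, mul_rpow_sub_one hy ha1]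

private lemma scalar_key {m v a : ℝ} (hm : 0 ≤ m) (hv : 0 ≤ v) (ha1 : 1 ≤ a) :
    v * m ^ (a - 1) + v ^ (a - 1) * m ≤ (v + m) ^ a := by
  have h1 : m ^ (a - 1) ≤ (v + m) ^ (a - 1) :=
    Real.rpow_le_rpow hm (by linarith) (by linarith)
  have h2 : v ^ (a - 1) ≤ (v + m) ^ (a - 1) :=
    Real.rpow_le_rpow hv (by linarith) (by linarith)
  have h3 : (v + m) ^ a = (v + m) * (v + m) ^ (a - 1) :=
    (mul_rpow_sub_one (by linarith) ha1).symm
  rw [h3]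
  nlinarith [Real.rpow_nonneg (show (0:ℝ) ≤ v + m by linarith) (a - 1)]

private lemma integrable_rpow_aux [IsProbabilityMeasure μ] {g : Ω → ℝ} (hg : Measurable g)
    (hgp : ∀ ω, 0 ≤ g ω) {a : ℝ} (hgi : Integrable (fun ω => g ω ^ a) μ)
    {b : ℝ} (hb : 0 ≤ b) (hba : b ≤ a) : Integrable (fun ω => g ω ^ b) μ := by
  refine Integrable.mono' ((integrable_const 1).add hgi)
    (by fun_prop : Measurable fun ω => g ω ^ b).aestronglyMeasurable ?_
  filter_upwards with ω
  rw [Real.norm_eq_abs, abs_of_nonneg (Real.rpow_nonneg (hgp ω) b)]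
  exact aux_rpow_le_one_add (hgp ω) hb hba

private lemma integrable_of_rpow [IsProbabilityMeasure μ] {g : Ω → ℝ} (hg : Measurable g)
    (hgp : ∀ ω, 0 ≤ g ω) {a : ℝ} (ha : 1 ≤ a) (hgi : Integrable (fun ω => g ω ^ a) μ) :
    Integrable g μ := by
  have := integrable_rpow_aux hg hgp hgi (le_of_lt one_pos) ha
  simpa [Real.rpow_one] using this

private lemma jensen_rpow [IsProbabilityMeasure μ] {g : Ω → ℝ}
    (hg : Measurable g) (hgp : ∀ ω, 0 ≤ g ω) (hgi : Integrable g μ)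
    {p : ℝ} (hp0 : 0 ≤ p) (hp1 : p ≤ 1) :
    ∫ ω, g ω ^ p ∂μ ≤ (∫ ω, g ω ∂μ) ^ p := by
  rcases hp0.eq_or_lt with hp | hp
  · simp [← hp]
  set c := ∫ ω, g ω ∂μ with hc
  have hc0 : 0 ≤ c := integral_nonneg fun ω => hgp ω
  rcases hc0.eq_or_lt with h0 | h0
  · have hg0 : g =ᵐ[μ] 0 := by
      rw [← integral_eq_zero_iff_of_nonneg (fun ω => hgp ω) hgi]
      exact h0.symm
    have hae : (fun ω => g ω ^ p) =ᵐ[μ] 0 := by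
      filter_upwards [hg0] with ω hω
      have : g ω = 0 := hω
      simp [this, Real.zero_rpow hp.ne']
    rw [integral_congr_ae hae]
    simp [← h0, Real.zero_rpow hp.ne']
  · have hcne : c ≠ 0 := h0.ne'
    have hcp : (0:ℝ) ≤ c ^ p := Real.rpow_nonneg hc0 p
    have key : ∀ ω, g ω ^ p ≤ (1 - p) * c ^ p + (p * (c ^ p / c)) * g ω := by
      intro ω
      have hgw := hgp ω
      have hdiv : 0 ≤ g ω / c := div_nonneg hgw hc0
      have hs : (-1 : ℝ) ≤ g ω / c - 1 := by linarith
      have hb := rpow_one_add_le_one_add_mul_self hs hp0 hp1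
      rw [show (1 : ℝ) + (g ω / c - 1) = g ω / c by ring] at hb
      have hmul : g ω ^ p = c ^ p * (g ω / c) ^ p := by
        rw [← Real.mul_rpow hc0 hdiv, mul_div_cancel₀ _ hcne]
      calc g ω ^ p = c ^ p * (g ω / c) ^ p := hmul
        _ ≤ c ^ p * (1 + p * (g ω / c - 1)) := mul_le_mul_of_nonneg_left hb hcp
        _ = (1 - p) * c ^ p + (p * (c ^ p / c)) * g ω := by field_simp; ring
    have hint1 : Integrable (fun ω => g ω ^ p) μ := by
      have : Integrable (fun ω => g ω ^ (1:ℝ)) μ := by simpa [Real.rpow_one] using hgi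
      exact integrable_rpow_aux hg hgp this hp0 hp1
    have hint2 : Integrable (fun ω => (1 - p) * c ^ p + (p * (c ^ p / c)) * g ω) μ :=
      (integrable_const _).add (hgi.const_mul _)
    have hle := integral_mono hint1 hint2 key
    have heq : ∫ ω, ((1 - p) * c ^ p + (p * (c ^ p / c)) * g ω) ∂μ
        = (1 - p) * c ^ p + (p * (c ^ p / c)) * c := by
      rw [integral_add (integrable_const _) (hgi.const_mul _), integral_const,
        integral_const_mul]
      simp [← hc]
    rw [heq] at hle
    calc ∫ ω, g ω ^ p ∂μ ≤ (1 - p) * c ^ p + (p * (c ^ p / c)) * c := hle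
      _ = c ^ p := by field_simp; ring

private lemma key_induction [IsProbabilityMeasure μ] {ι : Type*} (ξ : ι → Ω → ℝ)
    (hm : ∀ i, Measurable (ξ i)) (hp : ∀ i ω, 0 ≤ ξ i ω)
    (a : ℝ) (ha1 : 1 ≤ a) (ha2 : a ≤ 2)
    (hi : ∀ i, Integrable (fun ω => ξ i ω ^ a) μ)
    (hind : iIndepFun ξ μ) (s : Finset ι) :
    Integrable (fun ω => (∑ i ∈ s, ξ i ω) ^ a) μ ∧
    ∫ ω, (∑ i ∈ s, ξ i ω) ^ a ∂μ ≤
      (∑ i ∈ s, ∫ ω, ξ i ω ^ a ∂μ) + ((s.card : ℝ) - 1) * (∑ i ∈ s, ∫ ω, ξ i ω ∂μ) ^ a := by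
  classical
  have ha0 : (0:ℝ) < a := by linarith
  induction s using Finset.induction_on with
  | empty =>
      constructor
      · simpa [Real.zero_rpow ha0.ne'] using (integrable_const (0:ℝ) : Integrable (fun _ => (0:ℝ)) μ)
      · simp [Real.zero_rpow ha0.ne']
  | @insert j s hj ih =>
      rcases s.eq_empty_or_nonempty with rfl | hs
      · constructor
        · simpa using hi j
        · simp
      -- notation
      set S : Ω → ℝ := fun ω => ∑ i ∈ s, ξ i ω with hS
      have hSmeas : Measurable S := by
        apply Finset.measurable_sum
        exact fun i _ => hm i
      have hSpos : ∀ ω, 0 ≤ S ω := fun ω => Finset.sum_nonneg fun i _ => hp i ω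
      have hYmeas := hm j
      have hYpos := hp j
      -- independence of ξ j and S
      have hInd : IndepFun (ξ j) S μ := by
        have h := (hind.indepFun_finset_sum_of_notMem hm hj).symm
        have : (∑ i ∈ s, ξ i) = S := by ext ω; simp [hS]
        rwa [this] at h
      -- integrabilities
      have hSa : Integrable (fun ω => S ω ^ a) μ := ih.1
      have hSint : Integrable S μ := integrable_of_rpow hSmeas hSpos ha1 hSa
      have hYint : Integrable (ξ j) μ := integrable_of_rpow hYmeas hYpos ha1 (hi j)
      have hSam1 : Integrable (fun ω => S ω ^ (a - 1)) μ :=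
        integrable_rpow_aux hSmeas hSpos hSa (by linarith) (by linarith)
      have hYam1 : Integrable (fun ω => ξ j ω ^ (a - 1)) μ :=
        integrable_rpow_aux hYmeas hYpos (hi j) (by linarith) (by linarith)
      -- independence of composed functions
      have hInd1 : IndepFun (ξ j) (fun ω => S ω ^ (a - 1)) μ :=
        hInd.comp measurable_id (by fun_prop : Measurable fun x : ℝ => x ^ (a - 1))
      have hInd2 : IndepFun (fun ω => ξ j ω ^ (a - 1)) S μ :=
        hInd.comp (by fun_prop : Measurable fun x : ℝ => x ^ (a - 1)) measurable_id
      -- integrable products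
      have hprod1 : Integrable (fun ω => ξ j ω * S ω ^ (a - 1)) μ :=
        hInd1.integrable_mul hYint hSam1
      have hprod2 : Integrable (fun ω => ξ j ω ^ (a - 1) * S ω) μ :=
        hInd2.integrable_mul hYam1 hSint
      -- pointwise bound
      have hpt : ∀ ω, (ξ j ω + S ω) ^ a ≤
          ξ j ω ^ a + S ω ^ a + ξ j ω * S ω ^ (a - 1) + ξ j ω ^ (a - 1) * S ω :=
        fun ω => pointwise_key (hYpos ω) (hSpos ω) ha1 ha2
      have hRHSint : Integrable (fun ω =>
          ξ j ω ^ a + S ω ^ a + ξ j ω * S ω ^ (a - 1) + ξ j ω ^ (a - 1) * S ω) μ :=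
        (((hi j).add hSa).add hprod1).add hprod2
      have hLHSint : Integrable (fun ω => (ξ j ω + S ω) ^ a) μ := by
        refine Integrable.mono' hRHSint
          (by fun_prop : Measurable fun ω => (ξ j ω + S ω) ^ a).aestronglyMeasurable ?_
        filter_upwards with ω
        rw [Real.norm_eq_abs,
          abs_of_nonneg (Real.rpow_nonneg (add_nonneg (hYpos ω) (hSpos ω)) a)]
        exact hpt ω
      -- main integral inequality
      have hmono := integral_mono hLHSint hRHSint hpt
      -- split integral of RHS
      have hsplit : ∫ ω, (ξ j ω ^ a + S ω ^ a + ξ j ω * S ω ^ (a - 1)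
            + ξ j ω ^ (a - 1) * S ω) ∂μ
          = (∫ ω, ξ j ω ^ a ∂μ) + (∫ ω, S ω ^ a ∂μ)
            + (∫ ω, ξ j ω * S ω ^ (a - 1) ∂μ) + ∫ ω, ξ j ω ^ (a - 1) * S ω ∂μ := by
        have iAB : Integrable (fun ω => ξ j ω ^ a + S ω ^ a) μ := (hi j).add hSa
        have iABC : Integrable
            (fun ω => ξ j ω ^ a + S ω ^ a + ξ j ω * S ω ^ (a - 1)) μ := iAB.add hprod1
        rw [integral_add iABC hprod2, integral_add iAB hprod1, integral_add (hi j) hSa]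
      -- products factorize
      have hfac1 : ∫ ω, ξ j ω * S ω ^ (a - 1) ∂μ
          = (∫ ω, ξ j ω ∂μ) * ∫ ω, S ω ^ (a - 1) ∂μ :=
        hInd1.integral_mul_eq_mul_integral hYint.1 hSam1.1
      have hfac2 : ∫ ω, ξ j ω ^ (a - 1) * S ω ∂μ
          = (∫ ω, ξ j ω ^ (a - 1) ∂μ) * ∫ ω, S ω ∂μ :=
        hInd2.integral_mul_eq_mul_integral hYam1.1 hSint.1
      -- abbreviations for means
      set v := ∫ ω, ξ j ω ∂μ with hv
      set m := ∫ ω, S ω ∂μ with hmm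
      have hv0 : 0 ≤ v := integral_nonneg fun ω => hYpos ω
      have hm0 : 0 ≤ m := integral_nonneg fun ω => hSpos ω
      -- Jensen bounds
      have hj1 : ∫ ω, S ω ^ (a - 1) ∂μ ≤ m ^ (a - 1) :=
        jensen_rpow hSmeas hSpos hSint (by linarith) (by linarith)
      have hj2 : ∫ ω, ξ j ω ^ (a - 1) ∂μ ≤ v ^ (a - 1) :=
        jensen_rpow hYmeas (fun ω => hYpos ω) hYint (by linarith) (by linarith)
      have hbound : ∫ ω, (ξ j ω + S ω) ^ a ∂μ ≤
          (∫ ω, ξ j ω ^ a ∂μ) + (∫ ω, S ω ^ a ∂μ) + v * m ^ (a - 1) + v ^ (a - 1) * m := by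
        rw [hsplit, hfac1, hfac2] at hmono
        have b1 : v * (∫ ω, S ω ^ (a - 1) ∂μ) ≤ v * m ^ (a - 1) :=
          mul_le_mul_of_nonneg_left hj1 hv0
        have b2 : (∫ ω, ξ j ω ^ (a - 1) ∂μ) * m ≤ v ^ (a - 1) * m :=
          mul_le_mul_of_nonneg_right hj2 hm0
        linarith
      -- combine with the induction hypothesis
      have hcard : (1:ℝ) ≤ (s.card : ℝ) := by
        exact_mod_cast Nat.one_le_iff_ne_zero.2 (Finset.card_ne_zero_of_mem hs.choose_spec)
      have hIH := ih.2
      have hmsum : m = ∑ i ∈ s, ∫ ω, ξ i ω ∂μ := by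
        rw [hmm, hS, integral_finset_sum s fun i _ =>
          integrable_of_rpow (hm i) (hp i) ha1 (hi i)]
      have hvm : m ^ a ≤ (v + m) ^ a :=
        Real.rpow_le_rpow hm0 (by linarith) (by linarith)
      have hscal : v * m ^ (a - 1) + v ^ (a - 1) * m ≤ (v + m) ^ a := scalar_key hm0 hv0 ha1
      have hfinal : ∫ ω, (ξ j ω + S ω) ^ a ∂μ ≤
          (∫ ω, ξ j ω ^ a ∂μ) + (∑ i ∈ s, ∫ ω, ξ i ω ^ a ∂μ)
            + ((s.card : ℝ)) * (v + m) ^ a := by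
        have h1 : ∫ ω, S ω ^ a ∂μ ≤
            (∑ i ∈ s, ∫ ω, ξ i ω ^ a ∂μ) + ((s.card : ℝ) - 1) * m ^ a := by
          simpa [hS, ← hmsum] using hIH
        have h2 : ((s.card : ℝ) - 1) * m ^ a ≤ ((s.card : ℝ) - 1) * (v + m) ^ a :=
          mul_le_mul_of_nonneg_left hvm (by linarith)
        calc ∫ ω, (ξ j ω + S ω) ^ a ∂μ
            ≤ (∫ ω, ξ j ω ^ a ∂μ) + (∫ ω, S ω ^ a ∂μ) + v * m ^ (a - 1) + v ^ (a - 1) * m :=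
              hbound
          _ ≤ (∫ ω, ξ j ω ^ a ∂μ) + ((∑ i ∈ s, ∫ ω, ξ i ω ^ a ∂μ)
              + ((s.card : ℝ) - 1) * m ^ a) + (v + m) ^ a := by linarith
          _ ≤ (∫ ω, ξ j ω ^ a ∂μ) + (∑ i ∈ s, ∫ ω, ξ i ω ^ a ∂μ)
              + ((s.card : ℝ)) * (v + m) ^ a := by linarith
      constructor
      · have : (fun ω => (∑ i ∈ insert j s, ξ i ω) ^ a)
            = fun ω => (ξ j ω + S ω) ^ a := by
          funext ω; rw [Finset.sum_insert hj]
        rw [this]; exact hLHSint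
      · have hsum_eq : ∀ ω, ∑ i ∈ insert j s, ξ i ω = ξ j ω + S ω := fun ω => by
          rw [Finset.sum_insert hj]
        have e1 : ∫ ω, (∑ i ∈ insert j s, ξ i ω) ^ a ∂μ = ∫ ω, (ξ j ω + S ω) ^ a ∂μ := by
          congr 1; funext ω; rw [hsum_eq]
        have e2 : (∑ i ∈ insert j s, ∫ ω, ξ i ω ^ a ∂μ)
            = (∫ ω, ξ j ω ^ a ∂μ) + ∑ i ∈ s, ∫ ω, ξ i ω ^ a ∂μ := Finset.sum_insert hj
        have e3 : (∑ i ∈ insert j s, ∫ ω, ξ i ω ∂μ) = v + m := by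
          rw [Finset.sum_insert hj, hmsum]
        have e4 : ((insert j s).card : ℝ) - 1 = (s.card : ℝ) := by
          rw [Finset.card_insert_of_notMem hj]; push_cast; ring
        rw [e1, e2, e3, e4]
        exact hfinal

end Aux

theorem stmt5 {Ω : Type*} [MeasurableSpace Ω] (μ : Measure Ω) [IsProbabilityMeasure μ]
    (k : ℕ) (hk : 1 ≤ k) (ξ : Fin k → Ω → ℝ)
    (hm : ∀ i, Measurable (ξ i)) (hp : ∀ i ω, 0 ≤ ξ i ω)
    (a : ℝ) (ha1 : 1 ≤ a) (ha2 : a ≤ 2)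
    (hi : ∀ i, Integrable (fun ω => ξ i ω ^ a) μ)
    (hind : iIndepFun ξ μ) :
    ∫ ω, (∑ i, ξ i ω) ^ a ∂μ ≤
      (∑ i, ∫ ω, ξ i ω ^ a ∂μ) + ((k : ℝ) - 1) * (∑ i, ∫ ω, ξ i ω ∂μ) ^ a := by
  have h := (key_induction ξ hm hp a ha1 ha2 hi hind Finset.univ).2
  simpa using h
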